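/- arXiv:1809.10662 — 3 statements merged into one kernel-verified Lean document; each statement's English description precedes it below -/
import Mathlib

section
/- If E ∈ C_10, then any quotient sheaf E' of E in Coh(X) lies in the extension closure ⟨C_00, C_10⟩. -/
/-!
A framework for torsion theory computations on elliptic threefolds
(following Angeles–Lo–van der Linden).

We axiomatize the setting of a Weierstraß elliptic threefold `π : X → B`:
`𝒜` plays the role of the abelian category `Coh(X)`, `D` plays the role of
the bounded derived category `D^b(Coh(X))` (a category with a shift by `ℤ`),
`ι : 𝒜 ⥤ D` is the canonical embedding, `Φ, Φhat` are the relative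
Fourier–Mukai autoequivalences, `dim E` is the dimension of `supp E`,
`fdim E` is the dimension of `π(supp E)`, `hat` is the Fourier–Mukai
transform of a WIT sheaf, `C20` is the class of pure 1-dimensional sheaves
with horizontal support, and `ch` is the Chern character (as a 2 × 3 integer
matrix, for the product threefold `X = C × B`).

The paper's `Properties' (D0–D3, Z1–Z2, A1–A4, TC1–TC3, C0–C1, CH0p–CH3p,
A4p) are encoded in the axiom structures `EllipticAxioms` (general
Weierstraß threefolds) and `ProductAxioms` (the product of an elliptic
curve and a K3 surface of Picard rank one).
-/

open CategoryTheory CategoryTheory.Limits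

universe v v' u u'

namespace EllipticFramework

variable {𝒜 : Type u} [Category.{v} 𝒜] [Abelian 𝒜]

/-- `(f, g)` form a short exact sequence `0 → A → B → C → 0`. -/
def IsShortExact {A B C : 𝒜} (f : A ⟶ B) (g : B ⟶ C) : Prop :=
  ∃ w : f ≫ g = 0, (ShortComplex.mk f g w).ShortExact

/-- `E'` is a quotient of `E` (in the abelian category). -/
def IsQuotient (E E' : 𝒜) : Prop := ∃ f : E ⟶ E', Epi f

/-- The extension closure `⟨T⟩` of a class of objects `T`: the smallest class of
objects containing `T` and the zero objects and closed under extensions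
(hence the object class of the smallest extension-closed full subcategory
containing `T`). -/
inductive ExtClosure (T : Set 𝒜) : 𝒜 → Prop
  | of {E : 𝒜} (hE : E ∈ T) : ExtClosure T E
  | zero {E : 𝒜} (hE : IsZero E) : ExtClosure T E
  | ext {A B C : 𝒜} (f : A ⟶ B) (g : B ⟶ C) (hfg : IsShortExact f g)
      (hA : ExtClosure T A) (hC : ExtClosure T C) : ExtClosure T B

/-- `Hom(T, F) = 0`. -/
def HomOrth (T F : Set 𝒜) : Prop :=
  ∀ ⦃A : 𝒜⦄, A ∈ T → ∀ ⦃B : 𝒜⦄, B ∈ F → ∀ f : A ⟶ B, f = 0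

/-- `(T, F)` is a torsion pair: `Hom(T, F) = 0` and every object `E` fits in a
short exact sequence `0 → A → E → C → 0` with `A ∈ T` and `C ∈ F`. -/
def IsTorsionPair (T F : Set 𝒜) : Prop :=
  HomOrth T F ∧
    ∀ E : 𝒜, ∃ (A C : 𝒜) (f : A ⟶ E) (g : E ⟶ C),
      A ∈ T ∧ C ∈ F ∧ IsShortExact f g

/-- `T` is a torsion class, i.e. the first member of some torsion pair. -/
def IsTorsionClass (T : Set 𝒜) : Prop := ∃ F : Set 𝒜, IsTorsionPair T F

/-- `(T, F)` is a torsion pair in the full (Serre, hence abelian) subcategory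
whose objects are the class `𝒮`. -/
def IsTorsionPairIn (𝒮 T F : Set 𝒜) : Prop :=
  T ⊆ 𝒮 ∧ F ⊆ 𝒮 ∧ HomOrth T F ∧
    ∀ E ∈ 𝒮, ∃ (A C : 𝒜) (f : A ⟶ E) (g : E ⟶ C),
      A ∈ T ∧ C ∈ F ∧ IsShortExact f g

/-- `T` is a torsion class in the full subcategory with object class `𝒮`. -/
def IsTorsionClassIn (𝒮 T : Set 𝒜) : Prop := ∃ F : Set 𝒜, IsTorsionPairIn 𝒮 T F

/-- `T` is (the object class of) a Serre subcategory: for every short exact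
sequence `0 → A → B → C → 0`, `B ∈ T` iff both `A ∈ T` and `C ∈ T`. -/
def IsSerre (T : Set 𝒜) : Prop :=
  ∀ {A B C : 𝒜} (f : A ⟶ B) (g : B ⟶ C), IsShortExact f g →
    (B ∈ T ↔ A ∈ T ∧ C ∈ T)

/-- The data of the elliptic-threefold framework. -/
structure EllipticData (𝒜 : Type u) (D : Type u') [Category.{v} 𝒜] [Abelian 𝒜]
    [Category.{v'} D] [HasShift D ℤ] where
  /-- the embedding `Coh(X) → D^b(Coh(X))` -/
  ι : 𝒜 ⥤ D
  /-- the relative Fourier–Mukai transform `Φ` -/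
  Φ : D ⥤ D
  /-- the relative Fourier–Mukai transform `Φ̂` -/
  Φhat : D ⥤ D
  /-- `dim E = dim supp(E)` -/
  dim : 𝒜 → ℕ
  /-- `fdim E = dim π(supp(E))` -/
  fdim : 𝒜 → ℕ
  /-- the transform `Ê` of a WIT sheaf `E` -/
  hat : 𝒜 → 𝒜
  /-- `C20 = 𝒜_h^{≤1}`: pure 1-dimensional sheaves all of whose 1-dimensional
  irreducible components of support meet every fiber of `π` in finitely many
  points -/
  C20 : Set 𝒜
  /-- the Chern character as a `2 × 3` integer matrix (product threefold case) -/
  ch : D → Fin 2 → Fin 3 → ℤ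

namespace EllipticData

variable {D : Type u'} [Category.{v'} D] [HasShift D ℤ]
variable (S : EllipticData 𝒜 D)

/-- `E` is `Φ`-WIT_i : `Φ(E) ≅ F[-i]` for some sheaf `F`.  `W_{i,Φ}`. -/
def WIT (i : ℤ) : Set 𝒜 :=
  {E | ∃ F : 𝒜, Nonempty (S.Φ.obj (S.ι.obj E) ≅ (S.ι.obj F)⟦(-i)⟧)}

/-- `E` is `Φ̂`-WIT_i.  `W_{i,Φ̂}`. -/
def WIThat (i : ℤ) : Set 𝒜 :=
  {E | ∃ F : 𝒜, Nonempty (S.Φhat.obj (S.ι.obj E) ≅ (S.ι.obj F)⟦(-i)⟧)}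

/-- `𝒜_X^{≤ d}`, sheaves of dimension at most `d`. -/
def Adim (d : ℕ) : Set 𝒜 := {E | S.dim E ≤ d}

/-- `𝒜(π)_{≤ e}`, sheaves with `dim π(supp E) ≤ e`;  `Afib 0 = 𝒜(π)_0`. -/
def Afib (e : ℕ) : Set 𝒜 := {E | S.fdim E ≤ e}

/-- `𝒜^d(π)_e = {E : dim E = d, dim π(supp E) = e}`. -/
def Ade (d e : ℕ) : Set 𝒜 := {E | S.dim E = d ∧ S.fdim E = e}

/-- `C_00 = 𝒜_X^{≤0}`. -/
def C00 : Set 𝒜 := S.Adim 0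

/-- `C_10 = {E ∈ 𝒜(π)_0 ∩ W_{0,Φ} : Hom(C_00, E) = 0}`. -/
def C10 : Set 𝒜 :=
  {E | E ∈ S.Afib 0 ∧ E ∈ S.WIT 0 ∧ ∀ A ∈ S.C00, ∀ f : A ⟶ E, f = 0}

/-- `C_11 = {E ∈ 𝒜(π)_0 ∩ W_{1,Φ} : dim Ê = 0}`. -/
def C11 : Set 𝒜 :=
  {E | E ∈ S.Afib 0 ∧ E ∈ S.WIT 1 ∧ S.dim (S.hat E) = 0}

/-- `C_12 = {E ∈ 𝒜(π)_0 ∩ W_{1,Φ} : dim Ê = 1, Hom(C_11, E) = 0}`. -/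
def C12 : Set 𝒜 :=
  {E | E ∈ S.Afib 0 ∧ E ∈ S.WIT 1 ∧ S.dim (S.hat E) = 1 ∧
    ∀ A ∈ S.C11, ∀ f : A ⟶ E, f = 0}

/-- `C_30 = 𝒜^2(π)_1 ∩ W_{0,Φ}`. -/
def C30 : Set 𝒜 := {E | E ∈ S.Ade 2 1 ∧ E ∈ S.WIT 0}

/-- `C_31 = {E ∈ Φ(C_20) : dim E = 2}` (every sheaf in `C_20` is `Φ`-WIT_0). -/
def C31 : Set 𝒜 := {E | S.dim E = 2 ∧ ∃ F ∈ S.C20, Nonempty (S.hat F ≅ E)}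

/-- `C_32 = {E ∈ 𝒜^2(π)_1 ∩ W_{1,Φ} : dim Ê = 2}`. -/
def C32 : Set 𝒜 := {E | E ∈ S.Ade 2 1 ∧ E ∈ S.WIT 1 ∧ S.dim (S.hat E) = 2}

/-- `C_40 = {E ∈ 𝒜^2(π)_2 ∩ W_{0,Φ} : dim Ê = 3}`. -/
def C40 : Set 𝒜 := {E | E ∈ S.Ade 2 2 ∧ E ∈ S.WIT 0 ∧ S.dim (S.hat E) = 3}

/-- `C_50 = 𝒜^3(π)_2 ∩ W_{0,Φ}`. -/
def C50 : Set 𝒜 := {E | E ∈ S.Ade 3 2 ∧ E ∈ S.WIT 0}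

/-- `C_51 = {E ∈ 𝒜^3(π)_2 ∩ W_{1,Φ} : dim Ê = 2}`. -/
def C51 : Set 𝒜 := {E | E ∈ S.Ade 3 2 ∧ E ∈ S.WIT 1 ∧ S.dim (S.hat E) = 2}

/-- `C_52 = {E ∈ 𝒜^3(π)_2 ∩ W_{1,Φ} : dim Ê = 3}`. -/
def C52 : Set 𝒜 := {E | E ∈ S.Ade 3 2 ∧ E ∈ S.WIT 1 ∧ S.dim (S.hat E) = 3}

/-- `𝒯_00 = ⟨C_00⟩`. -/
def T00 : Set 𝒜 := ExtClosure S.C00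
/-- `𝒯_10 = ⟨C_00, C_10⟩`. -/
def T10 : Set 𝒜 := ExtClosure (S.C00 ∪ S.C10)
/-- `𝒯_11 = ⟨𝒯_10, C_11⟩`. -/
def T11 : Set 𝒜 := ExtClosure (S.C00 ∪ S.C10 ∪ S.C11)
/-- `𝒯_12 = ⟨𝒯_11, C_12⟩`. -/
def T12 : Set 𝒜 := ExtClosure (S.C00 ∪ S.C10 ∪ S.C11 ∪ S.C12)
/-- `𝒯_20 = ⟨C_ij : i ≤ 2⟩`. -/
def T20 : Set 𝒜 := ExtClosure (S.C00 ∪ S.C10 ∪ S.C11 ∪ S.C12 ∪ S.C20)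
/-- `𝒯_30 = ⟨𝒯_20, C_30⟩`. -/
def T30 : Set 𝒜 := ExtClosure (S.C00 ∪ S.C10 ∪ S.C11 ∪ S.C12 ∪ S.C20 ∪ S.C30)
/-- `𝒯_31 = ⟨𝒯_30, C_31⟩`. -/
def T31 : Set 𝒜 :=
  ExtClosure (S.C00 ∪ S.C10 ∪ S.C11 ∪ S.C12 ∪ S.C20 ∪ S.C30 ∪ S.C31)
/-- `𝒯_32 = ⟨𝒯_31, C_32⟩`. -/
def T32 : Set 𝒜 :=
  ExtClosure (S.C00 ∪ S.C10 ∪ S.C11 ∪ S.C12 ∪ S.C20 ∪ S.C30 ∪ S.C31 ∪ S.C32)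
/-- `𝒯_40 = ⟨C_ij : i ≤ 4⟩`. -/
def T40 : Set 𝒜 :=
  ExtClosure (S.C00 ∪ S.C10 ∪ S.C11 ∪ S.C12 ∪ S.C20 ∪ S.C30 ∪ S.C31 ∪ S.C32 ∪ S.C40)
/-- `𝒯_50 = ⟨𝒯_40, C_50⟩`. -/
def T50 : Set 𝒜 :=
  ExtClosure (S.C00 ∪ S.C10 ∪ S.C11 ∪ S.C12 ∪ S.C20 ∪ S.C30 ∪ S.C31 ∪ S.C32 ∪ S.C40 ∪ S.C50)
/-- `𝒯_51 = ⟨𝒯_50, C_51⟩`. -/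
def T51 : Set 𝒜 :=
  ExtClosure (S.C00 ∪ S.C10 ∪ S.C11 ∪ S.C12 ∪ S.C20 ∪ S.C30 ∪ S.C31 ∪ S.C32 ∪ S.C40 ∪ S.C50 ∪ S.C51)
/-- `𝒯_52 = ⟨𝒯_51, C_52⟩`. -/
def T52 : Set 𝒜 :=
  ExtClosure (S.C00 ∪ S.C10 ∪ S.C11 ∪ S.C12 ∪ S.C20 ∪ S.C30 ∪ S.C31 ∪ S.C32 ∪ S.C40 ∪ S.C50 ∪ S.C51 ∪ S.C52)
/-- `ℱ_2 = ⟨C_00, C_10, C_20⟩`. -/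
def F2 : Set 𝒜 := ExtClosure (S.C00 ∪ S.C10 ∪ S.C20)
/-- `ℱ_3 = ⟨C_00, C_10, C_20, C_30⟩`. -/
def F3 : Set 𝒜 := ExtClosure (S.C00 ∪ S.C10 ∪ S.C20 ∪ S.C30)
/-- `ℱ_4 = ⟨C_00, …, C_40⟩`. -/
def F4 : Set 𝒜 := ExtClosure (S.C00 ∪ S.C10 ∪ S.C20 ∪ S.C30 ∪ S.C40)
/-- `ℱ_5 = ⟨C_00, …, C_50⟩`. -/
def F5 : Set 𝒜 := ExtClosure (S.C00 ∪ S.C10 ∪ S.C20 ∪ S.C30 ∪ S.C40 ∪ S.C50)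

end EllipticData

/-- The axioms (`Properties') of a Weierstraß elliptic threefold `π : X → B`,
following Angeles–Lo–van der Linden, Section 3. -/
structure EllipticAxioms {D : Type u'} [Category.{v'} D] [HasShift D ℤ]
    (S : EllipticData 𝒜 D) : Prop where
  /-- `Coh(X)` is noetherian. -/
  noetherian : ∀ E : 𝒜, WellFoundedGT (Subobject E)
  /-- `X` is a threefold. -/
  dim_le_three : ∀ E : 𝒜, S.dim E ≤ 3
  /-- `B` is a surface. -/
  fdim_le_two : ∀ E : 𝒜, S.fdim E ≤ 2
  /-- Property D2 (first part): `dim π(supp E) ≤ dim E`. -/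
  fdim_le_dim : ∀ E : 𝒜, S.fdim E ≤ S.dim E
  /-- Property D2 (second part; `π` is flat of relative dimension 1). -/
  dim_le_fdim_add_one : ∀ E : 𝒜, S.dim E ≤ S.fdim E + 1
  /-- Property D1: `dim B = max (dim A) (dim C)` in a short exact sequence. -/
  dim_ses : ∀ {A B C : 𝒜} (f : A ⟶ B) (g : B ⟶ C),
    IsShortExact f g → S.dim B = max (S.dim A) (S.dim C)
  /-- Property D3: the analogue of D1 for `dim π(supp -)`. -/
  fdim_ses : ∀ {A B C : 𝒜} (f : A ⟶ B) (g : B ⟶ C),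
    IsShortExact f g → S.fdim B = max (S.fdim A) (S.fdim C)
  /-- Property A2: `Φ̂ ∘ Φ ≅ id[-1]`. -/
  comp₁ : Nonempty (S.Φ ⋙ S.Φhat ≅ shiftFunctor D (-1 : ℤ))
  /-- Property A2: `Φ ∘ Φ̂ ≅ id[-1]`. -/
  comp₂ : Nonempty (S.Φhat ⋙ S.Φ ≅ shiftFunctor D (-1 : ℤ))
  /-- `hat E` is a transform of the `Φ`-WIT_i sheaf `E`. -/
  hat_spec : ∀ (i : ℤ), ∀ E ∈ S.WIT i,
    Nonempty (S.Φ.obj (S.ι.obj E) ≅ (S.ι.obj (S.hat E))⟦(-i)⟧)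
  /-- Property A3: `dim π(supp E) = dim π(supp ΦE)`. -/
  a3 : ∀ (E F : 𝒜) (i : ℤ),
    Nonempty (S.Φ.obj (S.ι.obj E) ≅ (S.ι.obj F)⟦(-i)⟧) → S.fdim F = S.fdim E
  /-- Property TC1: each `𝒜_X^{≤ d}` is a Serre subcategory. -/
  tc1 : ∀ d : ℕ, IsSerre (S.Adim d)
  /-- Property TC2: each `𝒜(π)_{≤ e}` is a Serre subcategory. -/
  tc2 : ∀ e : ℕ, IsSerre (S.Afib e)
  /-- Property TC3: `(W_{0,Φ}, W_{1,Φ})` is a torsion pair in `Coh(X)`. -/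
  tc3 : IsTorsionPair (S.WIT 0) (S.WIT 1)
  /-- Property C0: `C_00 ⊆ W_{0,Φ}`. -/
  c0 : S.C00 ⊆ S.WIT 0
  /-- Property C1: `C_20 ⊆ W_{0,Φ}`. -/
  c1 : S.C20 ⊆ S.WIT 0
  /-- Sheaves in `C_20` are 1-dimensional with 1-dimensional image under `π`. -/
  c20_dim : ∀ E ∈ S.C20, S.dim E = 1 ∧ S.fdim E = 1
  /-- Properties Z1, Z2, D1: a 1-dimensional quotient of a horizontal sheaf is
  horizontal. -/
  c20_quot : ∀ E ∈ S.C20, ∀ E' : 𝒜, IsQuotient E E' → S.dim E' = 1 → E' ∈ S.C20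
  /-- Properties Z1, Z2: every sheaf of dimension ≤ 1 is an extension of a
  fiber sheaf by a sheaf in `C_00 ∪ C_20`. -/
  hv_decomp : ∀ E ∈ S.Adim 1, ∃ (Eh Ev : 𝒜) (f : Eh ⟶ E) (g : E ⟶ Ev),
    IsShortExact f g ∧ Eh ∈ S.C00 ∪ S.C20 ∧ Ev ∈ S.Afib 0

/-- The extra axioms available when `X = C × B` is the product of a smooth
elliptic curve `C` and a K3 surface `B` of Picard rank one, with `π` the
second projection (Properties CH1p, CH2p, CH3p, A4p). -/
structure ProductAxioms {D : Type u'} [Category.{v'} D] [HasShift D ℤ]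
    (S : EllipticData 𝒜 D) : Prop where
  /-- Property CH1p: `codim E = min {i + j : α_ij ≠ 0}` for a nonzero sheaf. -/
  ch1p : ∀ E : 𝒜, ¬ IsZero E →
    3 - S.dim E =
      sInf {n : ℕ | ∃ (i : Fin 2) (j : Fin 3),
        (i : ℕ) + (j : ℕ) = n ∧ S.ch (S.ι.obj E) i j ≠ 0}
  /-- Property CH2p: `dim π(supp E) = max {2 - j : α_1j ≠ 0}`. -/
  ch2p : ∀ E : 𝒜, ¬ IsZero E →
    S.fdim E = sSup {n : ℕ | ∃ j : Fin 3, 2 - (j : ℕ) = n ∧ S.ch (S.ι.obj E) 1 j ≠ 0}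
  /-- Property CH3p: `∑_{i+j = codim E} α_ij > 0` for a nonzero sheaf. -/
  ch3p : ∀ E : 𝒜, ¬ IsZero E →
    0 < ∑ i : Fin 2, ∑ j : Fin 3,
      (if (i : ℕ) + (j : ℕ) = 3 - S.dim E then S.ch (S.ι.obj E) i j else 0)
  /-- Property A4p: `ch(ΦE)` is obtained from `ch(E)` by a signed row swap. -/
  a4p_phi : ∀ Z : D,
    (∀ j : Fin 3, S.ch (S.Φ.obj Z) 0 j = S.ch Z 1 j) ∧
    (∀ j : Fin 3, S.ch (S.Φ.obj Z) 1 j = - S.ch Z 0 j)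
  /-- Property A4p: `ch(E[1]) = - ch(E)`. -/
  a4p_shift : ∀ Z : D, ∀ (i : Fin 2) (j : Fin 3),
    S.ch (Z⟦(1 : ℤ)⟧) i j = - S.ch Z i j

end EllipticFramework

namespace EllipticFramework

section Helpers

variable {𝒜 : Type u} [Category.{v} 𝒜] [Abelian 𝒜]

/-- For an epimorphism `p`, `0 → ker p → A → B → 0` is short exact. -/
lemma isShortExact_of_epi {A B : 𝒜} (p : A ⟶ B) [Epi p] :
    IsShortExact (kernel.ι p) p :=
  ⟨kernel.condition p,
    { exact := ShortComplex.exact_of_f_is_kernel _ (kernelIsKernel p) }⟩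

/-- For a monomorphism `m`, `0 → A → B → coker m → 0` is short exact. -/
lemma isShortExact_of_mono {A B : 𝒜} (m : A ⟶ B) [Mono m] :
    IsShortExact m (cokernel.π m) :=
  ⟨cokernel.condition m,
    { exact := ShortComplex.exact_of_g_is_cokernel _ (cokernelIsCokernel m) }⟩

variable {D : Type u'} [Category.{v'} D] [HasShift D ℤ]

/-- `WIT i` is closed under isomorphism. -/
lemma wit_of_iso (S : EllipticData 𝒜 D) {i : ℤ} {A B : 𝒜} (e : A ≅ B)
    (h : A ∈ S.WIT i) : B ∈ S.WIT i := by
  obtain ⟨F, ⟨φ⟩⟩ := h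
  exact ⟨F, ⟨S.Φ.mapIso (S.ι.mapIso e.symm) ≪≫ φ⟩⟩

/-- `W_{0,Φ}` is closed under quotients (being a torsion class). -/
lemma wit0_quot (S : EllipticData 𝒜 D) (hS : EllipticAxioms S) {A B : 𝒜}
    (p : A ⟶ B) [Epi p] (hA : A ∈ S.WIT 0) : B ∈ S.WIT 0 := by
  obtain ⟨horth, hdecomp⟩ := hS.tc3
  obtain ⟨T, Fq, f, g, hT, hFq, w, hse⟩ := hdecomp B
  have hpg : p ≫ g = 0 := horth hA hFq (p ≫ g)
  have hg0 : g = 0 := by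
    rw [← cancel_epi p, hpg, comp_zero]
  haveI : Epi f := hse.exact.epi_f hg0
  haveI : Mono f := hse.mono_f
  haveI : IsIso f := isIso_of_mono_of_epi f
  exact wit_of_iso S (asIso f) hT

/-- `𝒜(π)_0` is closed under quotients. -/
lemma afib0_quot (S : EllipticData 𝒜 D) (hS : EllipticAxioms S) {A B : 𝒜}
    (p : A ⟶ B) [Epi p] (hA : A ∈ S.Afib 0) : B ∈ S.Afib 0 := by
  have h := hS.fdim_ses _ _ (isShortExact_of_epi p)
  have h2 : S.fdim B ≤ S.fdim A := h ▸ le_max_right _ _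
  exact h2.trans hA

end Helpers

end EllipticFramework

namespace EllipticFramework

/-- Lemma 4.5.  If `E ∈ C_10`, then any quotient sheaf `E'`
of `E` in `Coh(X)` lies in the extension closure `⟨C_00, C_10⟩`. -/
theorem quotient_of_C10 {𝒜 : Type u} {D : Type u'} [Category.{v} 𝒜] [Abelian 𝒜]
    [Category.{v'} D] [HasShift D ℤ] (S : EllipticData 𝒜 D)
    (hS : EllipticAxioms S) (E : 𝒜) (hE : E ∈ S.C10) (E' : 𝒜)
    (hq : IsQuotient E E') :
    ExtClosure (S.C00 ∪ S.C10) E' := by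
  obtain ⟨hfib, hwit, _⟩ := hE
  obtain ⟨q, hq⟩ := hq
  haveI := hq
  haveI := hS.noetherian E
  have wf : WellFounded (fun a b : Subobject E => a > b) :=
    IsWellFounded.wf
  suffices H : ∀ K : Subobject E, ∀ (F : 𝒜) (p : E ⟶ F), Epi p →
      kernelSubobject p = K → ExtClosure (S.C00 ∪ S.C10) F from
    H _ E' q hq rfl
  intro K
  refine WellFounded.induction (C := fun K => ∀ (F : 𝒜) (p : E ⟶ F), Epi p →
    kernelSubobject p = K → ExtClosure (S.C00 ∪ S.C10) F) wf K ?_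
  intro K IH F p hp hker
  haveI := hp
  by_cases hO : ∀ A ∈ S.C00, ∀ f : A ⟶ F, f = 0
  · refine ExtClosure.of (Or.inr ⟨?_, wit0_quot S hS p hwit, hO⟩)
    exact afib0_quot S hS p hfib
  · push_neg at hO
    obtain ⟨A, hA, f, hf⟩ := hO
    haveI : Mono (image.ι f) := inferInstance
    -- the image of `f` lies in `C00`
    have hIdim : S.dim (image f) ≤ 0 := by
      haveI : Epi (factorThruImage f) := inferInstance
      have h := hS.dim_ses _ _ (isShortExact_of_epi (factorThruImage f))
      have h2 : S.dim (image f) ≤ S.dim A := h ▸ le_max_right _ _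
      exact h2.trans hA
    -- the image of `f` is nonzero
    have hInz : ¬ IsZero (image f) := by
      intro hz
      apply hf
      rw [← image.fac f, hz.eq_zero_of_src (image.ι f), comp_zero]
    set p' : F ⟶ cokernel (image.ι f) := cokernel.π (image.ι f) with hp'
    haveI : Epi (p ≫ p') := epi_comp _ _
    have hle : kernelSubobject p ≤ kernelSubobject (p ≫ p') :=
      kernelSubobject_comp_le p p'
    have hne : kernelSubobject p ≠ kernelSubobject (p ≫ p') := by
      intro heq
      have hle' : kernelSubobject (p ≫ p') ≤ kernelSubobject p := heq.ge
      have harr : (kernelSubobject (p ≫ p')).arrow ≫ p = 0 := by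
        rw [← Subobject.ofLE_arrow hle', Category.assoc,
          kernelSubobject_arrow_comp, comp_zero]
      have h0 : kernel.ι (p ≫ p') ≫ p = 0 := by
        rw [← kernelSubobject_arrow', Category.assoc, harr, comp_zero]
      set t := Abelian.epiDesc (p ≫ p') p h0 with ht
      have hcomp : (p ≫ p') ≫ t = p := Abelian.comp_epiDesc _ _ _
      have hid : p' ≫ t = 𝟙 F := by
        rw [← cancel_epi p]
        simpa [Category.assoc] using hcomp
      have hι0 : image.ι f = 0 := by
        calc image.ι f = image.ι f ≫ (p' ≫ t) := by rw [hid, Category.comp_id]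
          _ = (image.ι f ≫ p') ≫ t := by rw [Category.assoc]
          _ = (0 : image f ⟶ cokernel (image.ι f)) ≫ t := by rw [hp', cokernel.condition]
          _ = 0 := zero_comp
      exact hInz (IsZero.of_mono_eq_zero _ hι0)
    have hlt : K < kernelSubobject (p ≫ p') := hker ▸ lt_of_le_of_ne hle hne
    have hC := IH (kernelSubobject (p ≫ p')) hlt (cokernel (image.ι f))
      (p ≫ p') inferInstance rfl
    exact ExtClosure.ext (image.ι f) p' (isShortExact_of_mono (image.ι f))
      (ExtClosure.of (Or.inl hIdim)) hC

end EllipticFramework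
end

section
/- Let T and C be full subcategories of Coh(X), with T a torsion class in Coh(X). Suppose that for every A ∈ C and every quotient A ↠ A' in Coh(X), the quotient A' lies in the extension closure ⟨T, C⟩. Then ⟨T, C⟩ is a torsion class in Coh(X). -/
/-!
A framework for torsion theory computations on elliptic threefolds
(following Angeles–Lo–van der Linden).

We axiomatize the setting of a Weierstraß elliptic threefold `π : X → B`:
`𝒜` plays the role of the abelian category `Coh(X)`, `D` plays the role of
the bounded derived category `D^b(Coh(X))` (a category with a shift by `ℤ`),
`ι : 𝒜 ⥤ D` is the canonical embedding, `Φ, Φhat` are the relative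
Fourier–Mukai autoequivalences, `dim E` is the dimension of `supp E`,
`fdim E` is the dimension of `π(supp E)`, `hat` is the Fourier–Mukai
transform of a WIT sheaf, `C20` is the class of pure 1-dimensional sheaves
with horizontal support, and `ch` is the Chern character (as a 2 × 3 integer
matrix, for the product threefold `X = C × B`).

The paper's `Properties' (D0–D3, Z1–Z2, A1–A4, TC1–TC3, C0–C1, CH0p–CH3p,
A4p) are encoded in the axiom structures `EllipticAxioms` (general
Weierstraß threefolds) and `ProductAxioms` (the product of an elliptic
curve and a K3 surface of Picard rank one).
-/

open CategoryTheory CategoryTheory.Limits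

universe v v' u u'

namespace EllipticFramework

open CategoryTheory.Abelian
open scoped Pseudoelement

section Aux

variable {𝒜 : Type u} [Category.{v} 𝒜] [Abelian 𝒜]

/-- The extension closure `⟨T ∪ C⟩` is closed under quotients, provided `T` is a
torsion class and every quotient of an object of `C` lies in the closure. -/
lemma extClosure_quot_closed {T C : Set 𝒜} (hT : IsTorsionClass T)
    (h : ∀ A ∈ C, ∀ A' : 𝒜, IsQuotient A A' → ExtClosure (T ∪ C) A')
    {B : 𝒜} (hB : ExtClosure (T ∪ C) B) :
    ∀ B' : 𝒜, IsQuotient B B' → ExtClosure (T ∪ C) B' := by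
  induction hB with
  | @of E hE =>
    rcases hE with hE | hE
    · rintro B' ⟨e, he⟩
      obtain ⟨F₀, hhom, hdec⟩ := hT
      obtain ⟨A, Cc, φ, ψ, hA, hC, w, SE⟩ := hdec B'
      haveI : Epi ψ := SE.epi_g
      haveI : Epi (e ≫ ψ) := epi_comp e ψ
      have hzero : (e ≫ ψ : E ⟶ Cc) = 0 := hhom hE hC _
      exact ExtClosure.ext φ ψ ⟨w, SE⟩ (ExtClosure.of (Or.inl hA))
        (ExtClosure.zero (IsZero.of_epi_eq_zero (e ≫ ψ) hzero))
    · exact fun B' hq => h E hE B' hq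
  | @zero E hE =>
    rintro B' ⟨e, he⟩
    exact ExtClosure.zero (IsZero.of_epi_eq_zero e (hE.eq_of_src e 0))
  | @ext A B Cc f g hfg hA hC ihA ihC =>
    rintro B' ⟨e, he⟩
    obtain ⟨w, SE⟩ := hfg
    have w' : Abelian.image.ι (f ≫ e) ≫ cokernel.π (f ≫ e) = 0 := kernel.condition _
    have SE' : (ShortComplex.mk (Abelian.image.ι (f ≫ e)) (cokernel.π (f ≫ e))
        w').ShortExact := by
      refine ShortComplex.ShortExact.mk' ?_ inferInstance inferInstance
      exact ShortComplex.exact_of_f_is_kernel _ (kernelIsKernel (cokernel.π (f ≫ e)))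
    have hI : ExtClosure (T ∪ C) (Abelian.image (f ≫ e)) :=
      ihA _ ⟨Abelian.factorThruImage (f ≫ e), inferInstance⟩
    have hfac : f ≫ e ≫ cokernel.π (f ≫ e) = 0 := by
      rw [← Category.assoc]; exact cokernel.condition (f ≫ e)
    haveI : Epi g := SE.epi_g
    obtain ⟨u, hu⟩ := SE.exact.desc' (e ≫ cokernel.π (f ≫ e)) hfac
    haveI : Epi (e ≫ cokernel.π (f ≫ e)) := epi_comp _ _
    haveI : Epi (g ≫ u) := by rw [hu]; infer_instance
    haveI : Epi u := epi_of_epi g u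
    have hK : ExtClosure (T ∪ C) (cokernel (f ≫ e)) := ihC _ ⟨u, inferInstance⟩
    exact ExtClosure.ext _ _ ⟨w', SE'⟩ hI hK

end Aux

/-- Lemma 4.12.  Let `T, C` be full subcategories of
`Coh(X)` (a noetherian abelian category), with `T` a torsion class.  If every
quotient (in `Coh(X)`) of every object of `C` lies in the extension closure
`⟨T, C⟩`, then `⟨T, C⟩` is a torsion class in `Coh(X)`. -/

theorem ext_closure_torsion_class {𝒜 : Type u} [Category.{v} 𝒜] [Abelian 𝒜]
    (noeth : ∀ E : 𝒜, WellFoundedGT (Subobject E))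
    (T C : Set 𝒜) (hT : IsTorsionClass T)
    (h : ∀ A ∈ C, ∀ A' : 𝒜, IsQuotient A A' → ExtClosure (T ∪ C) A') :
    IsTorsionClass (ExtClosure (T ∪ C)) := by
  classical
  refine ⟨{B | ∀ ⦃W : 𝒜⦄, ExtClosure (T ∪ C) W → ∀ f : W ⟶ B, f = 0}, ?_, ?_⟩
  · intro A hA B hB f; exact hB hA f
  · intro E
    obtain ⟨P, hP, hmax⟩ := (noeth E).wf.has_min
      {P : Subobject E | ExtClosure (T ∪ C) ((P : Subobject E) : 𝒜)}
      ⟨⊥, ExtClosure.zero ((isZero_zero 𝒜).of_iso Subobject.botCoeIsoZero)⟩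
    refine ⟨(P : 𝒜), cokernel P.arrow, P.arrow, cokernel.π P.arrow, hP, ?_, ?_⟩
    · -- the quotient is torsion-free
      intro W hW f
      by_contra hf
      set c : E ⟶ cokernel P.arrow := cokernel.π P.arrow with hcdef
      set g : E ⟶ cokernel f := c ≫ cokernel.π f with hgdef
      set i : Abelian.image f ⟶ cokernel P.arrow := Abelian.image.ι f with hidef
      set q : kernel g ⟶ E := kernel.ι g with hqdef
      have hqc : (q ≫ c) ≫ cokernel.π f = 0 := by
        rw [Category.assoc, ← hgdef]; exact kernel.condition g
      set ψ : kernel g ⟶ Abelian.image f := kernel.lift (cokernel.π f) (q ≫ c) hqc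
        with hψdef
      have hψi : ψ ≫ i = q ≫ c := kernel.lift_ι _ _ _
      have hPg : P.arrow ≫ g = 0 := by
        rw [hgdef, ← Category.assoc, cokernel.condition, zero_comp]
      set φ : (P : 𝒜) ⟶ kernel g := kernel.lift g P.arrow hPg with hφdef
      have hφq : φ ≫ q = P.arrow := kernel.lift_ι _ _ _
      haveI : Mono φ := mono_of_mono_fac hφq
      -- ψ is epi (pseudoelement chase)
      haveI : Epi ψ := by
        apply Pseudoelement.epi_of_pseudo_surjective
        intro b
        have hb : (cokernel.π f) (i b) = 0 := by
          rw [← Pseudoelement.comp_apply, hidef, kernel.condition]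
          exact Pseudoelement.zero_apply _ b
        obtain ⟨e, he⟩ := Pseudoelement.pseudo_surjective_of_epi c (i b)
        have hge : g e = 0 := by
          rw [hgdef, Pseudoelement.comp_apply, he, hb]
        have hexq : (ShortComplex.mk q g (kernel.condition g)).Exact :=
          ShortComplex.exact_of_f_is_kernel _ (kernelIsKernel g)
        obtain ⟨y, hy⟩ := Pseudoelement.pseudo_exact_of_exact hexq e hge
        refine ⟨y, Pseudoelement.pseudo_injective_of_mono i ?_⟩
        rw [← Pseudoelement.comp_apply, hψi, Pseudoelement.comp_apply, hy, he]
      -- the short exact sequence 0 → P → Q → im f → 0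
      have wφψ : φ ≫ ψ = 0 := by
        apply zero_of_comp_mono i
        rw [Category.assoc, hψi, ← Category.assoc, hφq, hcdef, cokernel.condition]
      have hexP : (ShortComplex.mk P.arrow c (cokernel.condition P.arrow)).Exact :=
        ShortComplex.exact_of_g_is_cokernel _ (cokernelIsCokernel P.arrow)
      have SEQ : (ShortComplex.mk φ ψ wφψ).ShortExact := by
        refine ShortComplex.ShortExact.mk' ?_ inferInstance inferInstance
        apply Pseudoelement.exact_of_pseudo_exact
        intro b hb
        have hqb : c (q b) = 0 := by
          rw [← Pseudoelement.comp_apply, ← hψi, Pseudoelement.comp_apply, hb]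
          exact Pseudoelement.apply_zero i
        obtain ⟨p, hp⟩ := Pseudoelement.pseudo_exact_of_exact hexP (q b) hqb
        refine ⟨p, Pseudoelement.pseudo_injective_of_mono q ?_⟩
        rw [← Pseudoelement.comp_apply, hφq, hp]
      have hQ : ExtClosure (T ∪ C) (kernel g) :=
        ExtClosure.ext φ ψ ⟨wφψ, SEQ⟩ hP
          (extClosure_quot_closed hT h hW _ ⟨Abelian.factorThruImage f, inferInstance⟩)
      have hmkQ : ExtClosure (T ∪ C) ((Subobject.mk q : Subobject E) : 𝒜) :=
        extClosure_quot_closed hT h hQ _ ⟨(Subobject.underlyingIso q).inv, inferInstance⟩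
      have hle : P ≤ Subobject.mk q := by
        have := Subobject.mk_le_mk_of_comm φ hφq
        rwa [Subobject.mk_arrow] at this
      have hle2 : Subobject.mk q ≤ P := by
        by_contra hcon
        exact hmax _ hmkQ (lt_of_le_not_ge hle hcon)
      have h1 : (Subobject.mk q).arrow ≫ c = 0 := by
        rw [← Subobject.ofLE_arrow hle2, Category.assoc, hcdef, cokernel.condition,
          comp_zero]
      have h2 : q ≫ c = 0 := by
        rw [← Subobject.underlyingIso_arrow q, Category.assoc, h1, comp_zero]
      have hψ0 : ψ = 0 := by
        apply zero_of_comp_mono i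
        rw [hψi, h2]
      have hIzero : IsZero (Abelian.image f) := IsZero.of_epi_eq_zero ψ hψ0
      apply hf
      rw [← Abelian.image.fac f, hIzero.eq_of_src (Abelian.image.ι f) 0, comp_zero]
    · exact ⟨cokernel.condition P.arrow,
        ShortComplex.ShortExact.mk'
          (ShortComplex.exact_of_g_is_cokernel _ (cokernelIsCokernel P.arrow))
          inferInstance inferInstance⟩


end EllipticFramework
end

section
/- Let 1 ≤ m ≤ 3 be an integer and let E ∈ A^m(π)_{m-1} ∩ W_{0,Φ}. Then for any quotient E ↠ E' in Coh(X) with dim E' = m, we have E' ∈ A^m(π)_{m-1} ∩ W_{0,Φ}. -/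
/-!
A framework for torsion theory computations on elliptic threefolds
(following Angeles–Lo–van der Linden).

We axiomatize the setting of a Weierstraß elliptic threefold `π : X → B`:
`𝒜` plays the role of the abelian category `Coh(X)`, `D` plays the role of
the bounded derived category `D^b(Coh(X))` (a category with a shift by `ℤ`),
`ι : 𝒜 ⥤ D` is the canonical embedding, `Φ, Φhat` are the relative
Fourier–Mukai autoequivalences, `dim E` is the dimension of `supp E`,
`fdim E` is the dimension of `π(supp E)`, `hat` is the Fourier–Mukai
transform of a WIT sheaf, `C20` is the class of pure 1-dimensional sheaves
with horizontal support, and `ch` is the Chern character (as a 2 × 3 integer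
matrix, for the product threefold `X = C × B`).

The paper's `Properties' (D0–D3, Z1–Z2, A1–A4, TC1–TC3, C0–C1, CH0p–CH3p,
A4p) are encoded in the axiom structures `EllipticAxioms` (general
Weierstraß threefolds) and `ProductAxioms` (the product of an elliptic
curve and a K3 surface of Picard rank one).
-/

open CategoryTheory CategoryTheory.Limits

universe v v' u u'

namespace EllipticFramework

/-- Lemma 4.13.  Let `1 ≤ m ≤ 3` and
`E ∈ 𝒜^m(π)_{m-1} ∩ W_{0,Φ}`.  Then for any quotient `E ↠ E'` in `Coh(X)`
with `dim E' = m`, we have `E' ∈ 𝒜^m(π)_{m-1} ∩ W_{0,Φ}`. -/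
theorem quotient_in_Ade {𝒜 : Type u} {D : Type u'} [Category.{v} 𝒜] [Abelian 𝒜]
    [Category.{v'} D] [HasShift D ℤ] (S : EllipticData 𝒜 D)
    (hS : EllipticAxioms S) (m : ℕ) (hm1 : 1 ≤ m) (hm3 : m ≤ 3)
    (E : 𝒜) (hE : E ∈ S.Ade m (m - 1) ∩ S.WIT 0)
    (E' : 𝒜) (hq : IsQuotient E E') (hd : S.dim E' = m) :
    E' ∈ S.Ade m (m - 1) ∩ S.WIT 0 := by
  obtain ⟨⟨hdimE, hfdimE⟩, hW0⟩ := hE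
  obtain ⟨q, hq⟩ := hq
  -- short exact sequence 0 → ker q → E → E' → 0
  have hses : IsShortExact (kernel.ι q) q := by
    refine ⟨kernel.condition q, ?_⟩
    have hexact : (ShortComplex.mk (kernel.ι q) q (kernel.condition q)).Exact :=
      ShortComplex.exact_of_f_is_kernel _ (kernelIsKernel q)
    exact { exact := hexact }
  -- fdim computation
  have hfd : S.fdim E' = m - 1 := by
    have h1 := hS.fdim_ses (kernel.ι q) q hses
    have h2 := hS.dim_le_fdim_add_one E'
    rw [hfdimE] at h1
    have h3 : S.fdim E' ≤ m - 1 := le_max_right _ _ |>.trans h1.ge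
    omega
  refine ⟨⟨hd, hfd⟩, ?_⟩
  -- WIT 0: use the torsion pair (W₀, W₁)
  obtain ⟨horth, hdec⟩ := hS.tc3
  obtain ⟨A, C, f, g, hA, hC, hfg⟩ := hdec E'
  obtain ⟨w, hse⟩ := hfg
  have hgzero : q ≫ g = 0 := horth hW0 hC (q ≫ g)
  have hEpi : Epi (q ≫ g) := by
    have := hse.epi_g
    exact epi_comp q g
  have hCzero : IsZero C := by
    rw [IsZero.iff_id_eq_zero]
    rw [← cancel_epi (q ≫ g)]
    simp [hgzero]
  have hg0 : g = 0 := hCzero.eq_of_tgt g 0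
  have hmono : Mono f := hse.mono_f
  have hepi : Epi f := hse.exact.epi_f hg0
  have : IsIso f := isIso_of_mono_of_epi f
  obtain ⟨F, ⟨e⟩⟩ := hA
  exact ⟨F, ⟨(S.Φ.mapIso (S.ι.mapIso (asIso f))).symm ≪≫ e⟩⟩


end EllipticFramework
end
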